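/- (Proposition 6.19: cyclic property of the trace.) Let B : H →L[K] H be any continuous K-linear operator and let T : H →L[K] H be of trace class. Then both diagonal series converge, Summable (fun m => (B (T (e m))) m) and Summable (fun m => (T (B (e m))) m), and tr (B ∘ T) = tr (T ∘ B), i.e. ∑' m, (B (T (e m))) m = ∑' m, (T (B (e m))) m. Moreover T ∘ B is uniformly traceable: for every unitary U : H →L[K] H one has HasSum (fun m => ⟪U (e m), T (B (U (e m)))⟫) (∑' m, (B (T (e m))) m). -/

import Mathlib

set_option linter.unusedSectionVars false

open Filter

noncomputable section

variable (K : Type*) [NontriviallyNormedField K] [IsUltrametricDist K]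
  [CompleteSpace K] [StarRing K] [NormedStarGroup K]

/-- The p-adic coordinate Hilbert space: zero-convergent sequences in `K` with sup norm. -/
abbrev H := ZeroAtInftyContinuousMap ℕ K

/-- The standard basis vectors of `H K`. -/
def e (n : ℕ) : H K where
  toFun := fun m => if m = n then 1 else 0
  continuous_toFun := continuous_of_discreteTopology
  zero_at_infty' := by
    rw [cocompact_eq_atTop]
    refine Filter.Tendsto.congr' ?_ tendsto_const_nhds
    filter_upwards [Filter.eventually_gt_atTop n] with m hm
    simp [Nat.ne_of_gt hm]

/-- The canonical inner product on `H K`: `⟪x, y⟫ = ∑' i, star (x i) * y i`. -/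
def inner' (x y : H K) : K := ∑' i, star (x i) * y i

/-- A bounded operator is of trace class if its matrix entries vanish along the
cofinite filter of `ℕ × ℕ`. -/
def IsTraceClass (T : H K →L[K] H K) : Prop :=
  Tendsto (fun q : ℕ × ℕ => (T (e K q.2)) q.1) Filter.cofinite (nhds 0)

namespace Stmt13Aux

variable {K}

lemma apply_tendsto (x : H K) : Tendsto (fun i => x i) cofinite (nhds 0) := by
  have := x.zero_at_infty'
  rwa [cocompact_eq_atTop, ← Nat.cofinite_eq_atTop] at this

lemma norm_apply_le (x : H K) (i : ℕ) : ‖x i‖ ≤ ‖x‖ := by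
  rw [← ZeroAtInftyContinuousMap.norm_toBCF_eq_norm]
  exact x.toBCF.norm_coe_le_norm i

lemma norm_le_of (x : H K) {C : ℝ} (hC : 0 ≤ C) (h : ∀ i, ‖x i‖ ≤ C) : ‖x‖ ≤ C := by
  rw [← ZeroAtInftyContinuousMap.norm_toBCF_eq_norm]
  exact (BoundedContinuousFunction.norm_le hC).mpr h

lemma e_apply (n m : ℕ) : (e K n) m = if m = n then 1 else 0 := rfl

lemma norm_e_le (n : ℕ) : ‖e K n‖ ≤ 1 := by
  refine norm_le_of _ zero_le_one fun i => ?_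
  rw [e_apply]
  split <;> simp

/-- Evaluation at a point as a continuous linear map. -/
def evalCLM (i : ℕ) : H K →L[K] K :=
  LinearMap.mkContinuous
    { toFun := fun x => x i
      map_add' := fun x y => rfl
      map_smul' := fun c x => rfl }
    1 (fun x => by simpa using norm_apply_le x i)

lemma evalCLM_apply (i : ℕ) (x : H K) : evalCLM i x = x i := rfl

/-- Basis expansion: every element of `H K` is the sum of its coordinates times basis vectors. -/
lemma hasSum_expand (x : H K) : HasSum (fun m => x m • e K m) x := by
  rw [HasSum]
  change Tendsto _ atTop _
  rw [Metric.tendsto_atTop]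
  intro ε hε
  have hfin : {i : ℕ | ¬ ‖x i‖ < ε / 2}.Finite := by
    have := apply_tendsto x
    rw [Metric.tendsto_nhds] at this
    have h2 := this (ε / 2) (by linarith)
    rw [Filter.eventually_cofinite] at h2
    simpa [dist_zero_right] using h2
  refine ⟨hfin.toFinset, fun s hs => ?_⟩
  rw [dist_eq_norm]
  have key : ∀ i, ‖((∑ m ∈ s, x m • e K m) - x) i‖ ≤ ε / 2 := by
    intro i
    have hsum : ((∑ m ∈ s, x m • e K m) : H K) i = ∑ m ∈ s, x m * (e K m) i := by
      rw [← evalCLM_apply i]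
      rw [map_sum]
      simp [evalCLM_apply, ZeroAtInftyContinuousMap.smul_apply, smul_eq_mul]
    have hval : ((∑ m ∈ s, x m • e K m) : H K) i = if i ∈ s then x i else 0 := by
      rw [hsum]
      simp only [e_apply, mul_ite, mul_one, mul_zero]
      exact Finset.sum_ite_eq s i (fun m => x m)
    rw [ZeroAtInftyContinuousMap.sub_apply, hval]
    by_cases hi : i ∈ s
    · simp only [hi, if_true, sub_self, norm_zero]
      positivity
    · rw [if_neg hi, zero_sub, norm_neg]
      have : i ∉ hfin.toFinset := fun h => hi (hs h)
      rw [Set.Finite.mem_toFinset] at this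
      simp only [Set.mem_setOf_eq, not_not] at this
      linarith
  calc ‖(∑ m ∈ s, x m • e K m) - x‖ ≤ ε / 2 := norm_le_of _ (by linarith) key
    _ < ε := by linarith

lemma inner_e (m : ℕ) (y : H K) : inner' K (e K m) y = y m := by
  rw [inner']
  rw [tsum_eq_single m]
  · simp [e_apply]
  · intro i hi
    simp [e_apply, hi]

lemma summable_inner (x y : H K) : Summable (fun i => star (x i) * y i) := by
  apply NonarchimedeanAddGroup.summable_of_tendsto_cofinite_zero
  apply squeeze_zero_norm (a := fun i => ‖x i‖ * ‖y‖)
  · intro i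
    rw [norm_mul, norm_star]
    exact mul_le_mul_of_nonneg_left (norm_apply_le y i) (norm_nonneg _)
  · simpa using ((apply_tendsto x).norm).mul_const ‖y‖

/-- The inner product with a fixed vector on the left, as a continuous linear map. -/
def innerCLM (x : H K) : H K →L[K] K :=
  LinearMap.mkContinuous
    { toFun := fun y => inner' K x y
      map_add' := fun y z => by
        simp only [inner', ZeroAtInftyContinuousMap.add_apply, mul_add]
        exact Summable.tsum_add (summable_inner x y) (summable_inner x z)
      map_smul' := fun c y => by
        simp only [inner', ZeroAtInftyContinuousMap.smul_apply, smul_eq_mul, RingHom.id_apply]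
        rw [← tsum_mul_left]
        congr 1; funext i; ring }
    ‖x‖ (fun y => by
      simp only [LinearMap.coe_mk, AddHom.coe_mk]
      refine IsUltrametricDist.norm_tsum_le_of_forall_le_of_nonneg
        (mul_nonneg (norm_nonneg _) (norm_nonneg _)) fun i => ?_
      rw [norm_mul, norm_star]
      exact mul_le_mul (norm_apply_le x i) (norm_apply_le y i) (norm_nonneg _) (norm_nonneg _))

lemma innerCLM_apply (x y : H K) : innerCLM x y = inner' K x y := rfl

/-- Column norms of a trace-class operator vanish cofinitely. -/
lemma col_tendsto {T : H K →L[K] H K} (hT : IsTraceClass K T) :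
    Tendsto (fun m => ‖T (e K m)‖) cofinite (nhds 0) := by
  rw [Metric.tendsto_nhds]
  intro ε hε
  rw [Filter.eventually_cofinite]
  replace hT : Tendsto (fun q : ℕ × ℕ => (T (e K q.2)) q.1) Filter.cofinite (nhds 0) := hT
  rw [Metric.tendsto_nhds] at hT
  have h2 := hT (ε / 2) (by linarith)
  rw [Filter.eventually_cofinite] at h2
  apply Set.Finite.subset (h2.image Prod.snd)
  intro m hm
  by_contra hcon
  apply hm
  have hall : ∀ i : ℕ, ‖(T (e K m)) i‖ ≤ ε / 2 := by
    intro i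
    by_contra hi
    exact hcon ⟨(i, m), by
      simpa [dist_zero_right] using fun h => hi (le_of_lt h), rfl⟩
  have : ‖T (e K m)‖ ≤ ε / 2 := norm_le_of _ (by linarith) hall
  simp only [dist_zero_right, Real.norm_eq_abs, abs_of_nonneg (norm_nonneg _)]
  linarith

/-- An operator whose column norms vanish cofinitely is of trace class. -/
lemma traceClass_of_col (S : H K →L[K] H K)
    (h : Tendsto (fun k => ‖S (e K k)‖) cofinite (nhds 0)) : IsTraceClass K S := by
  rw [IsTraceClass, Metric.tendsto_nhds]
  intro ε hε
  rw [Filter.eventually_cofinite]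
  rw [Metric.tendsto_nhds] at h
  have h2 := h ε hε
  rw [Filter.eventually_cofinite] at h2
  have hfib : ∀ k : ℕ, {i : ℕ | ¬ dist ((S (e K k)) i) 0 < ε}.Finite := by
    intro k
    have := apply_tendsto (S (e K k))
    rw [Metric.tendsto_nhds] at this
    have h3 := this ε hε
    rwa [Filter.eventually_cofinite] at h3
  apply Set.Finite.subset
    (Set.Finite.biUnion h2 (fun k _ => (hfib k).image (fun i => ((i, k) : ℕ × ℕ))))
  rintro ⟨i, k⟩ hq
  simp only [Set.mem_setOf_eq] at hq
  have hk : k ∈ {k | ¬ dist ‖S (e K k)‖ 0 < ε} := by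
    simp only [Set.mem_setOf_eq, dist_zero_right, Real.norm_eq_abs,
      abs_of_nonneg (norm_nonneg _)]
    intro hlt
    exact hq (by
      rw [dist_zero_right]
      exact lt_of_le_of_lt (norm_apply_le (S (e K k)) i) hlt)
  exact Set.mem_biUnion hk ⟨i, hq, rfl⟩

end Stmt13Aux

set_option maxHeartbeats 4000000 in
open Stmt13Aux in
/-- Cyclic property of the trace: `tr (B ∘ T) = tr (T ∘ B)` for `B` bounded and `T` of
trace class; moreover `T ∘ B` is uniformly traceable. -/
theorem stmt13 (B T : H K →L[K] H K) (hT : IsTraceClass K T) :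
    Summable (fun m => (B (T (e K m))) m) ∧
    Summable (fun m => (T (B (e K m))) m) ∧
    (∑' m, (B (T (e K m))) m) = (∑' m, (T (B (e K m))) m) ∧
    (∀ U : H K →L[K] H K, Function.Surjective U → (∀ x : H K, ‖U x‖ = ‖x‖) →
      (∀ x y : H K, inner' K (U x) (U y) = inner' K x y) →
      HasSum (fun m => inner' K (U (e K m)) (T (B (U (e K m)))))
        (∑' m, (B (T (e K m))) m)) := by
  have hnormB : ∀ (x : H K) (k : ℕ), ‖(B x) k‖ ≤ ‖B‖ * ‖x‖ := fun x k =>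
    (norm_apply_le _ k).trans (B.le_opNorm x)
  set F : ℕ × ℕ → K := fun q => (T (e K q.1)) q.2 * (B (e K q.2)) q.1 with hFdef
  have hFtend : Tendsto F cofinite (nhds 0) := by
    apply squeeze_zero_norm (a := fun q : ℕ × ℕ => ‖(T (e K q.1)) q.2‖ * (‖B‖ * 1))
    · intro q
      simp only [hFdef, norm_mul]
      refine mul_le_mul_of_nonneg_left ?_ (norm_nonneg _)
      calc ‖(B (e K q.2)) q.1‖ ≤ ‖B‖ * ‖e K q.2‖ := hnormB _ _
        _ ≤ ‖B‖ * 1 := mul_le_mul_of_nonneg_left (norm_e_le _) (norm_nonneg B)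
    · have hswap : Tendsto (fun q : ℕ × ℕ => (T (e K q.1)) q.2) cofinite (nhds 0) := by
        have h1 : Tendsto (Prod.swap : ℕ × ℕ → ℕ × ℕ) cofinite cofinite :=
          Function.Injective.tendsto_cofinite Prod.swap_injective
        exact (hT : Tendsto (fun q : ℕ × ℕ => (T (e K q.2)) q.1) cofinite (nhds 0)).comp h1
      simpa using (hswap.norm).mul_const (‖B‖ * 1)
  have hFsum : Summable F := NonarchimedeanAddGroup.summable_of_tendsto_cofinite_zero hFtend
  have hfib1 : ∀ m, HasSum (fun k => F (m, k)) ((B (T (e K m))) m) := by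
    intro m
    have h1 := (evalCLM m).hasSum (B.hasSum (hasSum_expand (T (e K m))))
    have heq : (fun k => evalCLM m (B ((T (e K m)) k • e K k))) = fun k => F (m, k) := by
      funext k
      simp only [map_smul, evalCLM_apply, ZeroAtInftyContinuousMap.smul_apply, smul_eq_mul, hFdef]
    rwa [heq] at h1
  have hfib2 : ∀ k, HasSum (fun m => F (m, k)) ((T (B (e K k))) k) := by
    intro k
    have h1 := (evalCLM k).hasSum (T.hasSum (hasSum_expand (B (e K k))))
    have heq : (fun m => evalCLM k (T ((B (e K k)) m • e K m))) = fun m => F (m, k) := by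
      funext m
      simp only [map_smul, evalCLM_apply, ZeroAtInftyContinuousMap.smul_apply, smul_eq_mul, hFdef]
      exact mul_comm _ _
    rwa [heq] at h1
  have hsum1 : HasSum (fun m => (B (T (e K m))) m) (∑' q, F q) :=
    hFsum.hasSum.prod_fiberwise hfib1
  have hFs : HasSum (fun p : ℕ × ℕ => F p.swap) (∑' q, F q) :=
    ((Equiv.prodComm ℕ ℕ).hasSum_iff).mpr hFsum.hasSum
  have hsum2 : HasSum (fun k => (T (B (e K k))) k) (∑' q, F q) :=
    hFs.prod_fiberwise hfib2
  refine ⟨hsum1.summable, hsum2.summable, by rw [hsum1.tsum_eq, hsum2.tsum_eq], ?_⟩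
  intro U hsurj hnorm hIP
  have hinj : Function.Injective U := by
    intro a b hab
    have h0 : ‖U (a - b)‖ = 0 := by rw [map_sub, hab, sub_self, norm_zero]
    rw [hnorm] at h0
    exact sub_eq_zero.mp (norm_eq_zero.mp h0)
  let Ueq := LinearEquiv.ofBijective (U : H K →ₗ[K] H K) ⟨hinj, hsurj⟩
  have hUsymm : ∀ y, U ((Ueq.symm : H K →ₗ[K] H K) y) = y := fun y => Ueq.apply_symm_apply y
  let V : H K →L[K] H K :=
    LinearMap.mkContinuous (Ueq.symm : H K →ₗ[K] H K) 1 (fun y => by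
      rw [one_mul]
      exact le_of_eq (((hnorm _).symm).trans (by rw [hUsymm])))
  have hUV : ∀ y, U (V y) = y := fun y => hUsymm y
  have hVnorm : ∀ y, ‖V y‖ = ‖y‖ := fun y => (hnorm (V y)).symm.trans (by rw [hUV])
  have hVcoef : ∀ (m : ℕ) (y : H K), inner' K (U (e K m)) y = (V y) m := by
    intro m y
    conv_lhs => rw [← hUV y]
    rw [hIP, inner_e]
  clear_value V
  set G : ℕ × ℕ → K := fun q => (B (U (e K q.1))) q.2 * (V (T (e K q.2))) q.1 with hGdef
  have hVT : IsTraceClass K (V.comp T) := by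
    apply traceClass_of_col
    have h0 : (fun k => ‖(V.comp T) (e K k)‖) = fun k => ‖T (e K k)‖ := by
      funext k; rw [ContinuousLinearMap.comp_apply, hVnorm]
    rw [h0]; exact col_tendsto hT
  have hGtend : Tendsto G cofinite (nhds 0) := by
    apply squeeze_zero_norm (a := fun q : ℕ × ℕ => (‖B‖ * 1) * ‖(V (T (e K q.2))) q.1‖)
    · intro q
      simp only [hGdef, norm_mul]
      refine mul_le_mul_of_nonneg_right ?_ (norm_nonneg _)
      calc ‖(B (U (e K q.1))) q.2‖ ≤ ‖B‖ * ‖U (e K q.1)‖ := hnormB _ _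
        _ = ‖B‖ * ‖e K q.1‖ := by rw [hnorm]
        _ ≤ ‖B‖ * 1 := mul_le_mul_of_nonneg_left (norm_e_le _) (norm_nonneg B)
    · have h0 : Tendsto (fun q : ℕ × ℕ => (V (T (e K q.2))) q.1) cofinite (nhds 0) := hVT
      simpa using (h0.norm).const_mul (‖B‖ * 1)
  have hGsum : Summable G := NonarchimedeanAddGroup.summable_of_tendsto_cofinite_zero hGtend
  have hGfib1 : ∀ m, HasSum (fun k => G (m, k)) (inner' K (U (e K m)) (T (B (U (e K m))))) := by
    intro m
    have h1 := (innerCLM (U (e K m))).hasSum (T.hasSum (hasSum_expand (B (U (e K m)))))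
    have heq : (fun k => innerCLM (U (e K m)) (T ((B (U (e K m))) k • e K k)))
        = fun k => G (m, k) := by
      funext k
      simp only [map_smul, smul_eq_mul, innerCLM_apply, hVcoef, hGdef]
    rwa [heq] at h1
  have hGfib2 : ∀ k, HasSum (fun m => G (m, k)) ((B (T (e K k))) k) := by
    intro k
    have h1 := (evalCLM k).hasSum (B.hasSum (U.hasSum (hasSum_expand (V (T (e K k))))))
    have hval : B (U (V (T (e K k)))) = B (T (e K k)) := by rw [hUV]
    rw [hval] at h1
    have heq : (fun m => evalCLM k (B (U ((V (T (e K k))) m • e K m)))) = fun m => G (m, k) := by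
      funext m
      simp only [map_smul, evalCLM_apply, ZeroAtInftyContinuousMap.smul_apply, smul_eq_mul, hGdef]
      exact mul_comm _ _
    rwa [heq] at h1
  have hG1 : HasSum (fun m => inner' K (U (e K m)) (T (B (U (e K m))))) (∑' q, G q) :=
    hGsum.hasSum.prod_fiberwise hGfib1
  have hGs : HasSum (fun p : ℕ × ℕ => G p.swap) (∑' q, G q) :=
    ((Equiv.prodComm ℕ ℕ).hasSum_iff).mpr hGsum.hasSum
  have hG2 : HasSum (fun k => (B (T (e K k))) k) (∑' q, G q) :=
    hGs.prod_fiberwise hGfib2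
  rw [hG2.tsum_eq]
  exact hG1
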